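/- Let n ≥ 1, let Y ∈ ℂ^{n×n} be invertible, let V⁰ ∈ ℂⁿ, and let (V_*, s_*) be a base solution of the power flow equations diag(V_*)·conj(Y(V_* − V⁰)) = s_* with all entries of V_* nonzero; assume J_* is invertible with inverse blocks M_*, N_*. Let s ∈ ℂⁿ and set Δs = s − s_*. If 2·√( ‖M_*·conj(Z_*)·diag(conj(Δs)) + N_*·Z_*·diag(Δs)‖ · ‖J_*⁻¹‖ · ‖Z_*·diag(s)‖ ) + ‖M_*·conj(Z_*)·diag(conj(Δs)) + N_*·diag(Z_*·Δs)‖ + ‖M_*·diag(conj(Z_*·Δs)) + N_*·Z_*·diag(Δs)‖ ≤ 1, then there exists V ∈ ℂⁿ with all entries nonzero solving diag(V)·conj(Y(V − V⁰)) = s. -/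

import Mathlib

open Matrix Filter

/-- ℓ∞ norm of a complex vector: `max_i |x_i|`. -/
noncomputable def vnorm {n : ℕ} (x : Fin n → ℂ) : ℝ := ⨆ i, ‖x i‖

/-- Induced ∞-matrix norm: `max_i ∑_j |A_{ij}|`. -/
noncomputable def mnorm {n : ℕ} (A : Matrix (Fin n) (Fin n) ℂ) : ℝ :=
  ⨆ i, ∑ j, ‖A i j‖

/-- Induced ∞-matrix norm for 2n×2n block matrices. -/
noncomputable def mnorm2 {n : ℕ} (A : Matrix (Fin n ⊕ Fin n) (Fin n ⊕ Fin n) ℂ) : ℝ :=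
  ⨆ i, ∑ j, ‖A i j‖

/-- Entrywise complex conjugation of a matrix. -/
def mconj {n : ℕ} (A : Matrix (Fin n) (Fin n) ℂ) : Matrix (Fin n) (Fin n) ℂ :=
  A.map (starRingEnd ℂ)

set_option linter.unusedSectionVars false
set_option maxHeartbeats 1000000




section basics
variable {n : ℕ}

lemma mconj_mul (A B : Matrix (Fin n) (Fin n) ℂ) : mconj (A * B) = mconj A * mconj B := by
  simp [mconj, Matrix.map_mul]

lemma mconj_apply (A : Matrix (Fin n) (Fin n) ℂ) (i j : Fin n) :
    mconj A i j = star (A i j) := rfl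

lemma mulVec_apply' (A : Matrix (Fin n) (Fin n) ℂ) (x : Fin n → ℂ) (i : Fin n) :
    (A *ᵥ x) i = ∑ j, A i j * x j := rfl

lemma star_mulVec' (A : Matrix (Fin n) (Fin n) ℂ) (x : Fin n → ℂ) :
    star (A *ᵥ x) = mconj A *ᵥ star x := by
  funext i
  simp [mulVec_apply', mconj, star_sum, Pi.star_apply]

lemma mconj_mulVec_star (A : Matrix (Fin n) (Fin n) ℂ) (x : Fin n → ℂ) :
    mconj A *ᵥ star x = star (A *ᵥ x) := (star_mulVec' A x).symm

lemma mconj_diagonal (d : Fin n → ℂ) : mconj (diagonal d) = diagonal (star d) := by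
  funext i j
  by_cases h : i = j <;> simp [mconj, Matrix.diagonal, h, Pi.star_apply]

lemma diagonal_mulVec' (d x : Fin n → ℂ) : diagonal d *ᵥ x = d * x := by
  funext i
  simp [mulVec_apply', Matrix.diagonal_apply, Finset.sum_eq_single i, Pi.mul_apply]

lemma mconj_mconj (A : Matrix (Fin n) (Fin n) ℂ) : mconj (mconj A) = A := by
  funext i j; simp [mconj]

end basics





section norms
variable {n : ℕ} [Nonempty (Fin n)]

lemma row_le_mnorm (A : Matrix (Fin n) (Fin n) ℂ) (i : Fin n) :
    ∑ j, ‖A i j‖ ≤ mnorm A :=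
  le_ciSup (f := fun i => ∑ j, ‖A i j‖) (Set.Finite.bddAbove (Set.finite_range _)) i

lemma mnorm_nonneg (A : Matrix (Fin n) (Fin n) ℂ) : 0 ≤ mnorm A := by
  obtain ⟨i⟩ := (inferInstance : Nonempty (Fin n))
  exact le_trans (Finset.sum_nonneg fun j _ => norm_nonneg _) (row_le_mnorm A i)

lemma entry_le_mnorm (A : Matrix (Fin n) (Fin n) ℂ) (i j : Fin n) :
    ‖A i j‖ ≤ mnorm A := by
  refine le_trans ?_ (row_le_mnorm A i)
  exact Finset.single_le_sum (fun k _ => norm_nonneg _) (Finset.mem_univ j)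

lemma eq_zero_of_mnorm_nonpos (A : Matrix (Fin n) (Fin n) ℂ) (h : mnorm A ≤ 0) : A = 0 := by
  funext i j
  have h1 := entry_le_mnorm A i j
  have h2 := norm_nonneg (A i j)
  have : ‖A i j‖ = 0 := le_antisymm (h1.trans h) h2
  simpa using this

lemma mnorm_mconj (A : Matrix (Fin n) (Fin n) ℂ) : mnorm (mconj A) = mnorm A := by
  unfold mnorm
  congr 1; funext i; congr 1; funext j
  simp [mconj]

lemma norm_star_pi (x : Fin n → ℂ) : ‖star x‖ = ‖x‖ := by
  have key : ∀ y : Fin n → ℂ, ‖star y‖ ≤ ‖y‖ := by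
    intro y
    rw [pi_norm_le_iff_of_nonneg (norm_nonneg y)]
    intro i
    calc ‖(star y) i‖ = ‖y i‖ := by simp [Pi.star_apply]
    _ ≤ ‖y‖ := norm_le_pi_norm y i
  refine le_antisymm (key x) ?_
  have := key (star x)
  simpa using this

lemma norm_pi_mul_le (x y : Fin n → ℂ) : ‖x * y‖ ≤ ‖x‖ * ‖y‖ := by
  rw [pi_norm_le_iff_of_nonneg (mul_nonneg (norm_nonneg x) (norm_nonneg y))]
  intro i
  calc ‖(x * y) i‖ = ‖x i‖ * ‖y i‖ := by simp [Pi.mul_apply]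
  _ ≤ ‖x‖ * ‖y‖ :=
    mul_le_mul (norm_le_pi_norm x i) (norm_le_pi_norm y i) (norm_nonneg _) (norm_nonneg _)

lemma norm_mulVec_le (A : Matrix (Fin n) (Fin n) ℂ) (x : Fin n → ℂ) :
    ‖A *ᵥ x‖ ≤ mnorm A * ‖x‖ := by
  rw [pi_norm_le_iff_of_nonneg (mul_nonneg (mnorm_nonneg A) (norm_nonneg x))]
  intro i
  calc ‖(A *ᵥ x) i‖ = ‖∑ j, A i j * x j‖ := by simp [Matrix.mulVec, dotProduct]
  _ ≤ ∑ j, ‖A i j * x j‖ := norm_sum_le _ _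
  _ ≤ ∑ j, ‖A i j‖ * ‖x‖ := by
      refine Finset.sum_le_sum fun j _ => ?_
      rw [norm_mul]
      exact mul_le_mul_of_nonneg_left (by exact norm_le_pi_norm x j) (norm_nonneg _)
  _ = (∑ j, ‖A i j‖) * ‖x‖ := by rw [Finset.sum_mul]
  _ ≤ mnorm A * ‖x‖ := mul_le_mul_of_nonneg_right (row_le_mnorm A i) (norm_nonneg x)

lemma norm_mulVec_one_le (A : Matrix (Fin n) (Fin n) ℂ) :
    ‖A *ᵥ (fun _ => (1:ℂ))‖ ≤ mnorm A := by
  rw [pi_norm_le_iff_of_nonneg (mnorm_nonneg A)]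
  intro i
  calc ‖(A *ᵥ fun _ => (1:ℂ)) i‖ = ‖∑ j, A i j * 1‖ := by
        simp [Matrix.mulVec, dotProduct]
  _ ≤ ∑ j, ‖A i j * 1‖ := norm_sum_le _ _
  _ = ∑ j, ‖A i j‖ := by simp
  _ ≤ mnorm A := row_le_mnorm A i

-- mnorm2 facts
lemma row_le_mnorm2 (P : Matrix (Fin n ⊕ Fin n) (Fin n ⊕ Fin n) ℂ) (i : Fin n ⊕ Fin n) :
    ∑ j, ‖P i j‖ ≤ mnorm2 P :=
  le_ciSup (f := fun i => ∑ j, ‖P i j‖) (Set.Finite.bddAbove (Set.finite_range _)) i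

lemma mnorm2_nonneg (P : Matrix (Fin n ⊕ Fin n) (Fin n ⊕ Fin n) ℂ) : 0 ≤ mnorm2 P := by
  obtain ⟨i⟩ := (inferInstance : Nonempty (Fin n))
  exact le_trans (Finset.sum_nonneg fun j _ => norm_nonneg _)
    (row_le_mnorm2 P (Sum.inl i))

/-- Key pair bound: `‖M *ᵥ a + N *ᵥ star a‖ ≤ mnorm2 P * ‖a‖` when `M, N` are the
top blocks of `P`. -/
lemma norm_MN_star_le (P : Matrix (Fin n ⊕ Fin n) (Fin n ⊕ Fin n) ℂ)
    (M N : Matrix (Fin n) (Fin n) ℂ)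
    (h1 : ∀ i j, P (Sum.inl i) (Sum.inl j) = M i j)
    (h2 : ∀ i j, P (Sum.inl i) (Sum.inr j) = N i j)
    (a : Fin n → ℂ) :
    ‖M *ᵥ a + N *ᵥ star a‖ ≤ mnorm2 P * ‖a‖ := by
  rw [pi_norm_le_iff_of_nonneg (mul_nonneg (mnorm2_nonneg P) (norm_nonneg a))]
  intro i
  have hstar : ∀ j, ‖star (a j)‖ = ‖a j‖ := by simp
  calc ‖(M *ᵥ a + N *ᵥ star a) i‖
      = ‖(∑ j, M i j * a j) + ∑ j, N i j * star (a j)‖ := by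
        simp [Matrix.mulVec, dotProduct, Pi.star_apply]
  _ ≤ ‖∑ j, M i j * a j‖ + ‖∑ j, N i j * star (a j)‖ :=
        norm_add_le _ _
  _ ≤ (∑ j, ‖M i j * a j‖) + ∑ j, ‖N i j * star (a j)‖ :=
        add_le_add (norm_sum_le _ _) (norm_sum_le _ _)
  _ ≤ (∑ j, ‖M i j‖ * ‖a‖) + ∑ j, ‖N i j‖ * ‖a‖ := by
        refine add_le_add (Finset.sum_le_sum fun j _ => ?_) (Finset.sum_le_sum fun j _ => ?_)
        · rw [norm_mul]
          exact mul_le_mul_of_nonneg_left (by exact norm_le_pi_norm a j) (norm_nonneg _)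
        · rw [norm_mul, hstar j]
          exact mul_le_mul_of_nonneg_left (by exact norm_le_pi_norm a j) (norm_nonneg _)
  _ = ((∑ j, ‖M i j‖) + ∑ j, ‖N i j‖) * ‖a‖ := by
        rw [add_mul, Finset.sum_mul, Finset.sum_mul]
  _ ≤ mnorm2 P * ‖a‖ := by
        refine mul_le_mul_of_nonneg_right ?_ (norm_nonneg a)
        calc (∑ j, ‖M i j‖) + ∑ j, ‖N i j‖
            = ∑ q : Fin n ⊕ Fin n, ‖P (Sum.inl i) q‖ := by
              rw [Fintype.sum_sum_type]
              congr 1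
              · exact Finset.sum_congr rfl fun j _ => by rw [h1]
              · exact Finset.sum_congr rfl fun j _ => by rw [h2]
        _ ≤ mnorm2 P := row_le_mnorm2 P (Sum.inl i)

end norms


/-- Fixed point of a nonexpansive self-map of a closed ball in a
finite-dimensional real normed space. -/
lemma exists_fixedPt_of_nonexpansive {E : Type*} [NormedAddCommGroup E]
    [NormedSpace ℝ E] [FiniteDimensional ℝ E] (Φ : E → E) (hΦ : Continuous Φ)
    {r : ℝ} (hr : 0 ≤ r)
    (hself : ∀ u : E, ‖u‖ ≤ r → ‖Φ u‖ ≤ r)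
    (hne : ∀ u v : E, ‖u‖ ≤ r → ‖v‖ ≤ r → ‖Φ u - Φ v‖ ≤ ‖u - v‖) :
    ∃ u : E, ‖u‖ ≤ r ∧ Φ u = u := by
  set S : Set E := Metric.closedBall (0:E) r with hS
  have hmem : ∀ x : E, x ∈ S ↔ ‖x‖ ≤ r := by
    intro x; rw [hS, Metric.mem_closedBall, dist_zero_right]
  haveI : CompleteSpace S := IsClosed.completeSpace_coe (hs := Metric.isClosed_closedBall)
  haveI : Nonempty S := ⟨⟨0, by rw [hmem]; simpa using hr⟩⟩
  -- contraction factors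
  set c : ℕ → ℝ := fun m => ((m:ℝ)+1)/((m:ℝ)+2) with hc
  have hc0 : ∀ m, 0 ≤ c m := by
    intro m; apply div_nonneg <;> positivity
  have hc1 : ∀ m, c m < 1 := by
    intro m
    rw [hc, div_lt_one (by positivity)]
    linarith
  -- the scaled maps
  have hselfm : ∀ m : ℕ, ∀ p : S, c m • Φ (p : E) ∈ S := by
    intro m p
    rw [hmem]
    rw [norm_smul, Real.norm_eq_abs, abs_of_nonneg (hc0 m)]
    calc c m * ‖Φ (p : E)‖ ≤ 1 * r := by
          apply mul_le_mul (le_of_lt (hc1 m)) (hself _ ((hmem _).mp p.2)) (norm_nonneg _) zero_le_one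
    _ = r := one_mul r
  set g : ℕ → S → S := fun m p => ⟨c m • Φ (p : E), hselfm m p⟩ with hg
  have hcontr : ∀ m, ContractingWith ⟨c m, hc0 m⟩ (g m) := by
    intro m
    constructor
    · exact_mod_cast hc1 m
    · apply LipschitzWith.of_dist_le_mul
      intro p q
      rw [Subtype.dist_eq, Subtype.dist_eq]
      show dist (c m • Φ (p:E)) (c m • Φ (q:E)) ≤ _
      rw [dist_eq_norm, dist_eq_norm, ← smul_sub, norm_smul, Real.norm_eq_abs,
        abs_of_nonneg (hc0 m)]
      have : ‖Φ (p:E) - Φ (q:E)‖ ≤ ‖(p:E) - (q:E)‖ :=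
        hne _ _ ((hmem _).mp p.2) ((hmem _).mp q.2)
      exact mul_le_mul_of_nonneg_left this (hc0 m)
  set y : ℕ → E := fun m => ((ContractingWith.fixedPoint (g m) (hcontr m) : S) : E) with hy
  have hyfix : ∀ m, c m • Φ (y m) = y m := by
    intro m
    have := ContractingWith.fixedPoint_isFixedPt (hcontr m)
    have h2 := congrArg (Subtype.val) this
    exact h2
  have hymem : ∀ m, y m ∈ S := fun m => (ContractingWith.fixedPoint (g m) (hcontr m)).2
  -- compactness
  have hcomp : IsCompact S := isCompact_closedBall (0:E) r
  obtain ⟨x, hxS, φ, hφ, hlim⟩ := hcomp.tendsto_subseq hymem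
  refine ⟨x, (hmem x).mp hxS, ?_⟩
  -- c (φ m) → 1
  have hctend : Tendsto (fun m => c (φ m)) atTop (nhds 1) := by
    have h1 : Tendsto (fun m : ℕ => 1 - 1/((m:ℝ)+2)) atTop (nhds 1) := by
      have h2 : Tendsto (fun m : ℕ => 1/((m:ℝ)+2)) atTop (nhds 0) := by
        have h3 := tendsto_one_div_add_atTop_nhds_zero_nat (𝕜 := ℝ)
        have h4 : Tendsto (fun m : ℕ => m + 1) atTop atTop := tendsto_add_atTop_nat 1
        have h5 := h3.comp h4
        have h6 : (fun m : ℕ => 1/((m:ℝ)+2)) =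
            (fun n : ℕ => 1/((n:ℝ)+1)) ∘ (fun m : ℕ => m + 1) := by
          funext m
          simp only [Function.comp_apply]
          push_cast
          ring
        rw [h6]
        exact h5
      have := (tendsto_const_nhds (x := (1:ℝ)) (f := atTop)).sub h2
      simpa using this
    have hceq : ∀ m : ℕ, c m = 1 - 1/((m:ℝ)+2) := by
      intro m
      rw [hc]
      field_simp
      ring
    have h5 : Tendsto c atTop (nhds 1) := by
      simp only [funext hceq]
      exact h1
    exact h5.comp (hφ.tendsto_atTop)
  have hΦlim : Tendsto (fun m => Φ (y (φ m))) atTop (nhds (Φ x)) :=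
    (hΦ.continuousAt.tendsto).comp hlim
  have hall : Tendsto (fun m => c (φ m) • Φ (y (φ m))) atTop (nhds ((1:ℝ) • Φ x)) :=
    hctend.smul hΦlim
  rw [one_smul] at hall
  have heq : (fun m => c (φ m) • Φ (y (φ m))) = fun m => y (φ m) := by
    funext m; exact hyfix (φ m)
  rw [heq] at hall
  exact tendsto_nhds_unique hall hlim



section final
variable {n : ℕ}

lemma det_units (Y : Matrix (Fin n) (Fin n) ℂ) (hY : IsUnit Y) (Vs : Fin n → ℂ)
    (hVs : ∀ i, Vs i ≠ 0) :
    IsUnit (diagonal Vs).det ∧ IsUnit (diagonal (star Vs)).det ∧ IsUnit (mconj Y).det := by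
  refine ⟨?_, ?_, ?_⟩
  · rw [Matrix.det_diagonal, isUnit_iff_ne_zero]
    exact Finset.prod_ne_zero_iff.mpr fun i _ => hVs i
  · rw [Matrix.det_diagonal, isUnit_iff_ne_zero]
    exact Finset.prod_ne_zero_iff.mpr fun i _ => star_ne_zero.mpr (hVs i)
  · have h := (Matrix.isUnit_iff_isUnit_det Y).mp hY
    have h2 : (starRingEnd ℂ) Y.det = (mconj Y).det := by
      have := RingHom.map_det (starRingEnd ℂ) Y
      convert this using 2
      rfl
    rw [isUnit_iff_ne_zero] at h ⊢
    rw [← h2]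
    simpa using h

lemma WZ_eq_one (Y : Matrix (Fin n) (Fin n) ℂ) (hY : IsUnit Y) (Vs : Fin n → ℂ)
    (hVs : ∀ i, Vs i ≠ 0) (Z : Matrix (Fin n) (Fin n) ℂ)
    (hZ : Z = (diagonal (star Vs))⁻¹ * (mconj Y)⁻¹ * (diagonal Vs)⁻¹) :
    (diagonal Vs * mconj Y * diagonal (star Vs)) * Z = 1 ∧
    Z * (diagonal Vs * mconj Y * diagonal (star Vs)) = 1 := by
  obtain ⟨h1, h2, h3⟩ := det_units Y hY Vs hVs
  constructor
  · rw [hZ]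
    calc diagonal Vs * mconj Y * diagonal (star Vs) *
        ((diagonal (star Vs))⁻¹ * (mconj Y)⁻¹ * (diagonal Vs)⁻¹)
        = diagonal Vs * (mconj Y * (diagonal (star Vs) *
          ((diagonal (star Vs))⁻¹ * ((mconj Y)⁻¹ * (diagonal Vs)⁻¹)))) := by
          simp only [Matrix.mul_assoc]
    _ = diagonal Vs * (mconj Y * ((mconj Y)⁻¹ * (diagonal Vs)⁻¹)) := by
          rw [Matrix.mul_nonsing_inv_cancel_left _ _ h2]
    _ = diagonal Vs * (diagonal Vs)⁻¹ := by
          rw [Matrix.mul_nonsing_inv_cancel_left _ _ h3]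
    _ = 1 := Matrix.mul_nonsing_inv _ h1
  · rw [hZ]
    calc (diagonal (star Vs))⁻¹ * (mconj Y)⁻¹ * (diagonal Vs)⁻¹ *
        (diagonal Vs * mconj Y * diagonal (star Vs))
        = (diagonal (star Vs))⁻¹ * ((mconj Y)⁻¹ * ((diagonal Vs)⁻¹ *
          (diagonal Vs * (mconj Y * diagonal (star Vs))))) := by
          simp only [Matrix.mul_assoc]
    _ = (diagonal (star Vs))⁻¹ * ((mconj Y)⁻¹ * (mconj Y * diagonal (star Vs))) := by
          rw [Matrix.nonsing_inv_mul_cancel_left _ _ h1]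
    _ = (diagonal (star Vs))⁻¹ * diagonal (star Vs) := by
          rw [Matrix.nonsing_inv_mul_cancel_left _ _ h3]
    _ = 1 := Matrix.nonsing_inv_mul _ h2

/-- From the Hadamard relation to a power flow solution. -/
lemma solution_of_relation
    (Y : Matrix (Fin n) (Fin n) ℂ) (hY : IsUnit Y)
    (V0 Vs ss : Fin n → ℂ) (hVs : ∀ i, Vs i ≠ 0)
    (hbase : diagonal Vs *ᵥ star (Y *ᵥ (Vs - V0)) = ss)
    (Z : Matrix (Fin n) (Fin n) ℂ)
    (hZ : Z = (diagonal (star Vs))⁻¹ * (mconj Y)⁻¹ * (diagonal Vs)⁻¹)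
    (s Δs : Fin n → ℂ) (hΔs : Δs = s - ss)
    (u : Fin n → ℂ)
    (hrel : star u * (1 + Z *ᵥ (Δs - s * u)) = Z *ᵥ (Δs - s * u)) :
    ∃ V : Fin n → ℂ, (∀ i, V i ≠ 0) ∧
      diagonal V *ᵥ star (Y *ᵥ (V - V0)) = s := by
  set xb : Fin n → ℂ := Z *ᵥ (Δs - s * u) with hxb
  set x : Fin n → ℂ := star xb with hx
  -- the key scalar relation
  have key1 : ∀ i, u i * (1 + x i) = x i := by
    intro i
    have h := congrFun hrel i
    have h2 := congrArg star h
    simpa [Pi.star_apply, Pi.mul_apply, Pi.add_apply, Pi.one_apply, hx] using h2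
  have key2 : ∀ i, (1 + x i) * (1 - u i) = 1 := by
    intro i
    have h := key1 i
    ring_nf
    ring_nf at h
    linear_combination -h
  refine ⟨Vs * (1 + x), ?_, ?_⟩
  · intro i
    simp only [Pi.mul_apply, Pi.add_apply, Pi.one_apply]
    refine mul_ne_zero (hVs i) ?_
    intro h0
    have := key2 i
    rw [h0, zero_mul] at this
    exact one_ne_zero this.symm
  · -- power flow equation
    have hbase_i : ∀ i, Vs i * star (Y *ᵥ (Vs - V0)) i = ss i := by
      intro i
      have := congrFun hbase i
      rw [← this, diagonal_mulVec']
      rfl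
    have hsplit : Vs * (1 + x) - V0 = (Vs - V0) + Vs * x := by
      funext i; simp [Pi.mul_apply]; ring
    have claim2 : ∀ i, Vs i * star (Y *ᵥ (Vs * x)) i = Δs i - s i * u i := by
      have hW := (WZ_eq_one Y hY Vs hVs Z hZ).1
      have hchain : Vs * (mconj Y *ᵥ (star Vs * xb)) = Δs - s * u := by
        calc Vs * (mconj Y *ᵥ (star Vs * xb))
            = diagonal Vs *ᵥ (mconj Y *ᵥ (diagonal (star Vs) *ᵥ xb)) := by
              rw [diagonal_mulVec', diagonal_mulVec']
        _ = (diagonal Vs * mconj Y * diagonal (star Vs)) *ᵥ xb := by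
              rw [Matrix.mulVec_mulVec, Matrix.mulVec_mulVec, Matrix.mul_assoc]
        _ = ((diagonal Vs * mconj Y * diagonal (star Vs)) * Z) *ᵥ (Δs - s * u) := by
              rw [hxb, Matrix.mulVec_mulVec]
        _ = Δs - s * u := by rw [hW, Matrix.one_mulVec]
      intro i
      have hsx : star (Y *ᵥ (Vs * x)) = mconj Y *ᵥ (star Vs * xb) := by
        rw [star_mulVec']
        congr 1
        funext j
        simp [Pi.star_apply, Pi.mul_apply, hx]
      rw [hsx]
      have := congrFun hchain i
      simpa [Pi.mul_apply] using this
    funext i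
    rw [diagonal_mulVec']
    simp only [Pi.mul_apply]
    rw [hsplit, Matrix.mulVec_add]
    have hstar_add : star (Y *ᵥ (Vs - V0) + Y *ᵥ (Vs * x)) i
        = star (Y *ᵥ (Vs - V0)) i + star (Y *ᵥ (Vs * x)) i := by
      simp [Pi.star_apply, Pi.add_apply]
    rw [hstar_add]
    have e1 := hbase_i i
    have e2 := claim2 i
    have e3 := key2 i
    have hΔi : Δs i = s i - ss i := by rw [hΔs]; rfl
    -- (Vs*(1+x))_i * (q + r) = (1+x_i)*(ss_i + Δs_i - s_i u_i) = s_i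
    have expand : Vs i * (1 + x i) * (star (Y *ᵥ (Vs - V0)) i + star (Y *ᵥ (Vs * x)) i)
        = (1 + x i) * (Vs i * star (Y *ᵥ (Vs - V0)) i + Vs i * star (Y *ᵥ (Vs * x)) i) := by
      ring
    rw [Pi.add_apply, Pi.one_apply] at *
    rw [expand, e1, e2, hΔi]
    calc (1 + x i) * (ss i + (s i - ss i - s i * u i)) = s i * ((1 + x i) * (1 - u i)) := by ring
    _ = s i := by rw [e3, mul_one]
end final
section degenerate
variable {n : ℕ} [Nonempty (Fin n)]

/-- In the degenerate case `s = 0`, the certificate forces `(Z *ᵥ ss) k ≠ 1` for all `k`. -/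
lemma degenerate_ne_one
    (Z : Matrix (Fin n) (Fin n) ℂ) (hZc : IsUnit (mconj Z).det)
    (ss : Fin n → ℂ)
    (J : Matrix (Fin n ⊕ Fin n) (Fin n ⊕ Fin n) ℂ)
    (hJ : J = fromBlocks 1 (mconj Z * diagonal (star ss)) (Z * diagonal ss) 1)
    (hJu : IsUnit J)
    (M N : Matrix (Fin n) (Fin n) ℂ)
    (hMN : J⁻¹ = fromBlocks M N (mconj N) (mconj M))
    (Δs : Fin n → ℂ) (hΔ : Δs = -ss)
    (hβ : mnorm (M * mconj Z * diagonal (star Δs) + N * diagonal (Z *ᵥ Δs))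
        + mnorm (M * diagonal (star (Z *ᵥ Δs)) + N * Z * diagonal Δs) ≤ 1)
    (k : Fin n) : (Z *ᵥ ss) k ≠ 1 := by
  intro hk
  set d : Fin n → ℂ := Z *ᵥ ss with hd
  set B' : Matrix (Fin n) (Fin n) ℂ := mconj Z * diagonal (star ss) with hB'
  set C' : Matrix (Fin n) (Fin n) ℂ := Z * diagonal ss with hC'
  have hJdet : IsUnit J.det := (Matrix.isUnit_iff_isUnit_det J).mp hJu
  have hJJ : J * J⁻¹ = 1 := Matrix.mul_nonsing_inv J hJdet
  have hJJ' : J⁻¹ * J = 1 := Matrix.nonsing_inv_mul J hJdet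
  rw [hMN, hJ] at hJJ hJJ'
  rw [Matrix.fromBlocks_multiply] at hJJ hJJ'
  have t11 : (1 : Matrix (Fin n ⊕ Fin n) (Fin n ⊕ Fin n) ℂ).toBlocks₁₁ = 1 := by
    funext i j
    simp [Matrix.toBlocks₁₁, Matrix.one_apply]
  have t12 : (1 : Matrix (Fin n ⊕ Fin n) (Fin n ⊕ Fin n) ℂ).toBlocks₁₂ = 0 := by
    funext i j
    simp [Matrix.toBlocks₁₂, Matrix.one_apply]
  have t21 : (1 : Matrix (Fin n ⊕ Fin n) (Fin n ⊕ Fin n) ℂ).toBlocks₂₁ = 0 := by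
    funext i j
    simp [Matrix.toBlocks₂₁, Matrix.one_apply]
  -- block identities
  have hA : M + N * C' = 1 := by
    have := congrArg Matrix.toBlocks₁₁ hJJ'
    simpa [Matrix.toBlocks_fromBlocks₁₁, t11] using this
  have hB : M * B' + N = 0 := by
    have := congrArg Matrix.toBlocks₁₂ hJJ'
    simpa [Matrix.toBlocks_fromBlocks₁₂, t12] using this
  have hC : M + B' * mconj N = 1 := by
    have := congrArg Matrix.toBlocks₁₁ hJJ
    simpa [Matrix.toBlocks_fromBlocks₁₁, t11] using this
  have hD : C' * M + mconj N = 0 := by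
    have := congrArg Matrix.toBlocks₂₁ hJJ
    simpa [Matrix.toBlocks_fromBlocks₂₁, t21] using this
  have hNeq : N = -(M * B') := eq_neg_of_add_eq_zero_right hB
  have hNconj : mconj N = -(C' * M) := eq_neg_of_add_eq_zero_right hD
  -- T3’s (k,k) entry is -1
  have hZd : Z *ᵥ Δs = -d := by rw [hΔ, Matrix.mulVec_neg, hd]
  have hT3kk : (M * diagonal (star (Z *ᵥ Δs)) + N * Z * diagonal Δs) k k = -1 := by
    have h1 : (M * diagonal (star (Z *ᵥ Δs))) k k = M k k * star ((Z *ᵥ Δs) k) :=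
      Matrix.mul_diagonal _ _ _ _
    have h2 : (N * Z * diagonal Δs) k k = (N * Z) k k * Δs k :=
      Matrix.mul_diagonal _ _ _ _
    have h3 : (N * C') k k = (N * Z) k k * ss k := by
      rw [hC', ← Matrix.mul_assoc]
      exact Matrix.mul_diagonal _ _ _ _
    have h4 : (N * C') k k = (1 - M) k k := by
      have : N * C' = 1 - M := by
        have := hA
        have h5 : N * C' = 1 - M := by
          rw [← this]; abel
        exact h5
      rw [this]
    have h6 : (Z *ᵥ Δs) k = -1 := by rw [hZd]; simp [hk]
    have h7 : Δs k = -ss k := by rw [hΔ]; simp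
    simp only [Matrix.add_apply, h1, h2, h6, h7]
    have h8 : (N * Z) k k * ss k = (1 - M) k k := by rw [← h3, h4]
    have h9 : (1 - M) k k = 1 - M k k := by
      simp [Matrix.sub_apply, Matrix.one_apply]
    rw [h9] at h8
    have hstar1 : star (-1 : ℂ) = -1 := by simp
    rw [hstar1]
    linear_combination -h8
  -- therefore mnorm T2 ≤ 0, so T2 = 0
  have hT3ge : (1:ℝ) ≤ mnorm (M * diagonal (star (Z *ᵥ Δs)) + N * Z * diagonal Δs) := by
    have := entry_le_mnorm (M * diagonal (star (Z *ᵥ Δs)) + N * Z * diagonal Δs) k k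
    rw [hT3kk] at this
    simpa using this
  have hT2z : M * mconj Z * diagonal (star Δs) + N * diagonal (Z *ᵥ Δs) = 0 := by
    apply eq_zero_of_mnorm_nonpos
    linarith
  -- T2 = N - N * diagonal d, so N = N * diagonal d
  have hT2eq : M * mconj Z * diagonal (star Δs) + N * diagonal (Z *ᵥ Δs)
      = -N * diagonal d + N := by
    have e1 : M * mconj Z * diagonal (star Δs) = -(M * B') := by
      funext i j
      rw [hB', ← Matrix.mul_assoc]
      rw [Matrix.neg_apply, Matrix.mul_diagonal, Matrix.mul_diagonal]
      rw [hΔ]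
      simp only [Pi.star_apply, Pi.neg_apply, star_neg]
      ring
    have e2 : N * diagonal (Z *ᵥ Δs) = -N * diagonal d := by
      funext i j
      rw [hZd, Matrix.mul_diagonal, Matrix.mul_diagonal, Matrix.neg_apply]
      simp only [Pi.neg_apply]
      ring
    rw [e1, e2, ← hNeq]
    abel
  have hNd : N = N * diagonal d := by
    have h0 : -N * diagonal d + N = 0 := by rw [← hT2eq, hT2z]
    funext i j
    have h1 := congrFun (congrFun h0 i) j
    simp only [Matrix.add_apply, Matrix.neg_mul, Matrix.neg_apply, Matrix.mul_diagonal,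
      Matrix.zero_apply] at h1
    rw [Matrix.mul_diagonal]
    linear_combination h1
  -- support condition
  have hsupp : ∀ j, ss j = 0 ∨ d j = 1 := by
    intro j
    by_cases hdj : d j = 1
    · exact Or.inr hdj
    · left
      by_contra hssj
      -- column j of N is zero
      have hNcol : ∀ i, N i j = 0 := by
        intro i
        have := congrFun (congrFun hNd i) j
        rw [Matrix.mul_diagonal] at this
        have h2 : N i j * (1 - d j) = 0 := by
          rw [mul_sub, mul_one, ← this]
          ring
        rcases mul_eq_zero.mp h2 with h | h
        · exact h
        · exact absurd (sub_eq_zero.mp h).symm hdj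
      -- hence column j of M * mconj Z is zero
      have hMZcol : ∀ i, (M * mconj Z) i j = 0 := by
        intro i
        have h1 : (M * B') i j = (M * mconj Z) i j * star (ss j) := by
          rw [hB', ← Matrix.mul_assoc]
          exact Matrix.mul_diagonal _ _ _ _
        have h2 : (M * B') i j = -N i j := by rw [hNeq]; simp
        rw [hNcol i, neg_zero] at h2
        rw [h2] at h1
        have h3 : star (ss j) ≠ 0 := star_ne_zero.mpr hssj
        have := h1.symm
        rcases mul_eq_zero.mp this with h | h
        · exact h
        · exact absurd h h3
      -- contradiction with invertibility of M * mconj Z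
      have hMl : (1 - B' * C') * M = 1 := by
        have hexp : (1 - B' * C') * M = M - B' * (C' * M) := by
          rw [Matrix.sub_mul, Matrix.one_mul, Matrix.mul_assoc]
        rw [hexp]
        rw [hNconj, Matrix.mul_neg] at hC
        rw [sub_eq_add_neg]
        exact hC
      have hLA : ((mconj Z)⁻¹ * (1 - B' * C')) * (M * mconj Z) = 1 := by
        calc ((mconj Z)⁻¹ * (1 - B' * C')) * (M * mconj Z)
            = (mconj Z)⁻¹ * (((1 - B' * C') * M) * mconj Z) := by
              simp only [Matrix.mul_assoc]
        _ = (mconj Z)⁻¹ * (1 * mconj Z) := by rw [hMl]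
        _ = (mconj Z)⁻¹ * mconj Z := by rw [Matrix.one_mul]
        _ = 1 := Matrix.nonsing_inv_mul _ hZc
      have hsingle : (M * mconj Z) *ᵥ Pi.single j 1 = 0 := by
        funext i
        simp only [Matrix.mulVec, dotProduct]
        rw [Finset.sum_eq_single j]
        · rw [hMZcol i]; simp
        · intro b _ hb; simp [Pi.single_apply, hb]
        · intro h; exact absurd (Finset.mem_univ j) h
      have : (Pi.single j 1 : Fin n → ℂ) = 0 := by
        calc (Pi.single j 1 : Fin n → ℂ)
            = (((mconj Z)⁻¹ * (1 - B' * C')) * (M * mconj Z)) *ᵥ Pi.single j 1 := by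
              rw [hLA, Matrix.one_mulVec]
        _ = ((mconj Z)⁻¹ * (1 - B' * C')) *ᵥ ((M * mconj Z) *ᵥ Pi.single j 1) := by
              rw [Matrix.mulVec_mulVec]
        _ = 0 := by rw [hsingle, Matrix.mulVec_zero]
      have := congrFun this j
      simp [Pi.single_apply] at this
  -- the kernel vector
  have hssd : star ss * d = star ss := by
    funext j
    rcases hsupp j with h | h <;> simp [Pi.mul_apply, Pi.star_apply, h]
  have hssd2 : ss * star d = ss := by
    funext j
    rcases hsupp j with h | h <;> simp [Pi.mul_apply, Pi.star_apply, h]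
  set w : (Fin n ⊕ Fin n) → ℂ := Sum.elim (star d) (-d) with hw
  have hJw : J *ᵥ w = 0 := by
    rw [hJ]
    have hwl : w ∘ Sum.inl = star d := rfl
    have hwr : w ∘ Sum.inr = -d := rfl
    rw [Matrix.fromBlocks_mulVec, hwl, hwr]
    have htop : (1 : Matrix (Fin n) (Fin n) ℂ) *ᵥ star d
        + (mconj Z * diagonal (star ss)) *ᵥ (-d) = 0 := by
      rw [Matrix.one_mulVec, Matrix.mulVec_neg]
      have : (mconj Z * diagonal (star ss)) *ᵥ d = star d := by
        rw [← Matrix.mulVec_mulVec, diagonal_mulVec', hssd, mconj_mulVec_star, hd]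
      rw [this]
      simp
    have hbot : (Z * diagonal ss) *ᵥ star d + (1 : Matrix (Fin n) (Fin n) ℂ) *ᵥ (-d) = 0 := by
      rw [Matrix.one_mulVec]
      have : (Z * diagonal ss) *ᵥ star d = d := by
        rw [← Matrix.mulVec_mulVec, diagonal_mulVec', hssd2, hd]
      rw [this]
      simp
    rw [htop, hbot]
    funext q
    cases q <;> rfl
  have hw0 : w = 0 := by
    calc w = (J⁻¹ * J) *ᵥ w := by rw [Matrix.nonsing_inv_mul J hJdet, Matrix.one_mulVec]
    _ = J⁻¹ *ᵥ (J *ᵥ w) := by rw [Matrix.mulVec_mulVec]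
    _ = 0 := by rw [hJw, Matrix.mulVec_zero]
  have := congrFun hw0 (Sum.inl k)
  rw [hw] at this
  simp only [Sum.elim_inl, Pi.star_apply, Pi.zero_apply] at this
  rw [hk] at this
  simp at this
end degenerate
theorem solvability_certificate_opt_r {n : ℕ} (hn : 1 ≤ n)
    (Y : Matrix (Fin n) (Fin n) ℂ) (hY : IsUnit Y)
    (V0 Vs ss : Fin n → ℂ)
    (hVs : ∀ i, Vs i ≠ 0)
    (hbase : Matrix.diagonal Vs *ᵥ star (Y *ᵥ (Vs - V0)) = ss)
    (Z : Matrix (Fin n) (Fin n) ℂ)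
    (hZ : Z = (Matrix.diagonal (star Vs))⁻¹ * (mconj Y)⁻¹ * (Matrix.diagonal Vs)⁻¹)
    (J : Matrix (Fin n ⊕ Fin n) (Fin n ⊕ Fin n) ℂ)
    (hJ : J = Matrix.fromBlocks 1 (mconj Z * Matrix.diagonal (star ss))
                (Z * Matrix.diagonal ss) 1)
    (hJu : IsUnit J)
    (M N : Matrix (Fin n) (Fin n) ℂ)
    (hMN : J⁻¹ = Matrix.fromBlocks M N (mconj N) (mconj M))
    (s : Fin n → ℂ)
    (Δs : Fin n → ℂ) (hΔs : Δs = s - ss)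
    (hcond :
      2 * Real.sqrt
          (mnorm (M * mconj Z * Matrix.diagonal (star Δs) + N * Z * Matrix.diagonal Δs)
            * mnorm2 J⁻¹ * mnorm (Z * Matrix.diagonal s))
      + mnorm (M * mconj Z * Matrix.diagonal (star Δs) + N * Matrix.diagonal (Z *ᵥ Δs))
      + mnorm (M * Matrix.diagonal (star (Z *ᵥ Δs)) + N * Z * Matrix.diagonal Δs) ≤ 1) :
    ∃ V : Fin n → ℂ, (∀ i, V i ≠ 0) ∧
      Matrix.diagonal V *ᵥ star (Y *ᵥ (V - V0)) = s := by
  haveI : Nonempty (Fin n) := ⟨⟨0, hn⟩⟩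
  obtain ⟨hWZ, hZW⟩ := WZ_eq_one Y hY Vs hVs Z hZ
  -- it suffices to solve the Hadamard fixed-point relation
  suffices hu : ∃ u : Fin n → ℂ, star u * (1 + Z *ᵥ (Δs - s * u)) = Z *ᵥ (Δs - s * u) by
    obtain ⟨u, hrel⟩ := hu
    exact solution_of_relation Y hY V0 Vs ss hVs hbase Z hZ s Δs hΔs u hrel
  -- abbreviations
  set W1 : Matrix (Fin n) (Fin n) ℂ := Z * Matrix.diagonal s with hW1
  set T1 : Matrix (Fin n) (Fin n) ℂ :=
    M * mconj Z * Matrix.diagonal (star Δs) + N * Z * Matrix.diagonal Δs with hT1d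
  set T2 : Matrix (Fin n) (Fin n) ℂ :=
    M * mconj Z * Matrix.diagonal (star Δs) + N * Matrix.diagonal (Z *ᵥ Δs) with hT2d
  set T3 : Matrix (Fin n) (Fin n) ℂ :=
    M * Matrix.diagonal (star (Z *ᵥ Δs)) + N * Z * Matrix.diagonal Δs with hT3d
  by_cases hKz : mnorm W1 = 0
  · -- degenerate case: s = 0
    have hW1z : W1 = 0 := eq_zero_of_mnorm_nonpos W1 (le_of_eq hKz)
    have hs0 : s = 0 := by
      have h1 : Matrix.diagonal s = 0 := by
        calc Matrix.diagonal s
            = ((Matrix.diagonal Vs * mconj Y * Matrix.diagonal (star Vs)) * Z) *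
              Matrix.diagonal s := by rw [hWZ, Matrix.one_mul]
        _ = (Matrix.diagonal Vs * mconj Y * Matrix.diagonal (star Vs)) * W1 := by
              rw [Matrix.mul_assoc, ← hW1]
        _ = 0 := by rw [hW1z, Matrix.mul_zero]
      funext i
      have := congrFun (congrFun h1 i) i
      simpa [Matrix.diagonal_apply] using this
    have hΔneg : Δs = -ss := by rw [hΔs, hs0]; funext i; simp
    have hZu : IsUnit Z.det := by
      have hdet : Z.det * (Matrix.diagonal Vs * mconj Y * Matrix.diagonal (star Vs)).det = 1 := by
        rw [← Matrix.det_mul, hZW, Matrix.det_one]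
      exact IsUnit.of_mul_eq_one _ hdet
    have hZc : IsUnit (mconj Z).det := by
      have h2 : (starRingEnd ℂ) Z.det = (mconj Z).det := by
        have := RingHom.map_det (starRingEnd ℂ) Z
        convert this using 2
        rfl
      rw [isUnit_iff_ne_zero] at hZu ⊢
      rw [← h2]
      simpa using hZu
    have hβ1 : mnorm T2 + mnorm T3 ≤ 1 := by
      have hs := Real.sqrt_nonneg
        (mnorm T1 * mnorm2 J⁻¹ * mnorm W1)
      linarith [hcond]
    have hne := degenerate_ne_one Z hZc ss J hJ hJu M N hMN Δs hΔneg hβ1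
    -- explicit solution
    set e : Fin n → ℂ := Z *ᵥ Δs with he
    have hone : ∀ i, 1 + e i ≠ 0 := by
      intro i h0
      have h1 : e i = -(Z *ᵥ ss) i := by
        rw [he, hΔneg, Matrix.mulVec_neg]
        rfl
      apply hne i
      rw [h1] at h0
      have : (Z *ᵥ ss) i = 1 := by
        have := h0
        linear_combination -this
      exact this
    refine ⟨star (fun i => e i / (1 + e i)), ?_⟩
    have hsu : s * star (fun i => e i / (1 + e i)) = 0 := by
      rw [hs0]; funext i; simp
    rw [hsu]
    have hZΔ : Z *ᵥ (Δs - 0) = e := by rw [sub_zero, he]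
    rw [hZΔ]
    funext i
    simp only [Pi.mul_apply, Pi.star_apply, Pi.add_apply, Pi.one_apply, star_star]
    exact div_mul_cancel₀ (e i) (hone i)
  · -- main case : quadratic contraction ball
    have hKW : 0 < mnorm W1 := lt_of_le_of_ne (mnorm_nonneg W1) (Ne.symm hKz)
    have hJdet : IsUnit J.det := (Matrix.isUnit_iff_isUnit_det J).mp hJu
    have hJinvPos : 0 < mnorm2 J⁻¹ := by
      by_contra hcon
      push_neg at hcon
      have hzero : J⁻¹ = 0 := by
        funext p q'
        have h1 : ‖J⁻¹ p q'‖ ≤ mnorm2 J⁻¹ := by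
          refine le_trans ?_ (row_le_mnorm2 J⁻¹ p)
          exact Finset.single_le_sum (fun k _ => norm_nonneg _)
            (Finset.mem_univ q')
        have h3 : ‖J⁻¹ p q'‖ = 0 :=
          le_antisymm (le_trans h1 hcon) (norm_nonneg _)
        simpa using h3
      have h1 : J * J⁻¹ = 1 := Matrix.mul_nonsing_inv J hJdet
      rw [hzero, Matrix.mul_zero] at h1
      obtain ⟨i0⟩ := (inferInstance : Nonempty (Fin n))
      have := congrFun (congrFun h1 (Sum.inl i0)) (Sum.inl i0)
      simp [Matrix.one_apply] at this
    set K : ℝ := mnorm2 J⁻¹ * mnorm W1 with hK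
    have hKpos : 0 < K := mul_pos hJinvPos hKW
    set β : ℝ := mnorm T2 + mnorm T3 with hβ
    set a1 : ℝ := mnorm T1 with ha1
    have ha1nn : 0 ≤ a1 := mnorm_nonneg T1
    have hKnn : 0 ≤ a1 * K := mul_nonneg ha1nn (le_of_lt hKpos)
    have harg : a1 * mnorm2 J⁻¹ * mnorm W1 = a1 * K := by rw [hK]; ring
    rw [harg] at hcond
    have hβnn : 0 ≤ β := by
      have h1 := mnorm_nonneg T2
      have h2 := mnorm_nonneg T3
      rw [hβ]; linarith
    have hβ1 : β ≤ 1 := by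
      have := Real.sqrt_nonneg (a1*K)
      rw [hβ]; linarith
    have hsqle : 2*Real.sqrt (a1*K) ≤ 1 - β := by rw [hβ]; linarith
    have hD0 : 0 ≤ (1-β)^2 - 4*(a1*K) := by
      have h1 : (2*Real.sqrt (a1*K))^2 ≤ (1-β)^2 :=
        pow_le_pow_left₀ (by positivity) hsqle 2
      have h2 : (2*Real.sqrt (a1*K))^2 = 4*(a1*K) := by
        rw [mul_pow, Real.sq_sqrt hKnn]; ring
      linarith
    set σ : ℝ := Real.sqrt ((1-β)^2 - 4*(a1*K)) with hσdef
    have hσ2 : σ^2 = (1-β)^2 - 4*(a1*K) := Real.sq_sqrt hD0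
    have hσnn : 0 ≤ σ := Real.sqrt_nonneg _
    have hσle : σ ≤ 1 - β := by
      rw [hσdef]
      calc Real.sqrt ((1-β)^2 - 4*(a1*K)) ≤ Real.sqrt ((1-β)^2) :=
            Real.sqrt_le_sqrt (by linarith)
      _ = 1 - β := Real.sqrt_sq (by linarith)
    set r : ℝ := (1 - β - σ)/(2*K) with hrdef
    have hr0 : 0 ≤ r := div_nonneg (by linarith) (by linarith)
    have h2Kr : 2*K*r = 1 - β - σ := by
      rw [hrdef]
      field_simp
    have hre : a1 + β*r + K*r^2 = r := by
      have h4 : 4*K*(a1 + β*r + K*r^2) = 4*K*r := by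
        linear_combination (2*K*r - 1 + β - σ) * h2Kr + hσ2
      have h4K : (4*K) ≠ 0 := by positivity
      exact mul_left_cancel₀ h4K h4
    have hlip1 : β + 2*K*r ≤ 1 := by rw [h2Kr]; linarith
    -- the fixed point map
    set q : (Fin n → ℂ) → (Fin n → ℂ) := fun u => u * star (W1 *ᵥ u) with hq
    set c0 : Fin n → ℂ := M *ᵥ (mconj Z *ᵥ star Δs) + N *ᵥ (Z *ᵥ Δs) with hc0
    set Φ : (Fin n → ℂ) → (Fin n → ℂ) :=
      fun u => c0 - T3 *ᵥ u - T2 *ᵥ star u + (M *ᵥ q u + N *ᵥ star (q u)) with hΦ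
    have hone1 : Matrix.diagonal (star Δs) *ᵥ (fun _ => (1:ℂ)) = star Δs := by
      rw [diagonal_mulVec']
      funext j
      simp [Pi.mul_apply]
    have hone2 : Matrix.diagonal Δs *ᵥ (fun _ => (1:ℂ)) = Δs := by
      rw [diagonal_mulVec']
      funext j
      simp [Pi.mul_apply]
    have hc0T1 : c0 = T1 *ᵥ (fun _ => (1:ℂ)) := by
      rw [hT1d, Matrix.add_mulVec, hc0]
      congr 1
      · calc M *ᵥ (mconj Z *ᵥ star Δs)
            = M *ᵥ (mconj Z *ᵥ (Matrix.diagonal (star Δs) *ᵥ (fun _ => (1:ℂ)))) := by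
              rw [hone1]
        _ = (M * mconj Z * Matrix.diagonal (star Δs)) *ᵥ (fun _ => (1:ℂ)) := by
              rw [Matrix.mulVec_mulVec, Matrix.mulVec_mulVec]
      · calc N *ᵥ (Z *ᵥ Δs)
            = N *ᵥ (Z *ᵥ (Matrix.diagonal Δs *ᵥ (fun _ => (1:ℂ)))) := by
              rw [hone2]
        _ = (N * Z * Matrix.diagonal Δs) *ᵥ (fun _ => (1:ℂ)) := by
              rw [Matrix.mulVec_mulVec, Matrix.mulVec_mulVec]
    have hc0n : ‖c0‖ ≤ a1 := by
      rw [hc0T1, ha1]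
      exact norm_mulVec_one_le T1
    have hMNpair : ∀ w : Fin n → ℂ, ‖M *ᵥ w + N *ᵥ star w‖ ≤ mnorm2 J⁻¹ * ‖w‖ := by
      intro w
      refine norm_MN_star_le J⁻¹ M N ?_ ?_ w
      · intro i j; rw [hMN]; rfl
      · intro i j; rw [hMN]; rfl
    have hqn : ∀ u : Fin n → ℂ, ‖q u‖ ≤ mnorm W1 * (‖u‖ * ‖u‖) := by
      intro u
      calc ‖q u‖ ≤ ‖u‖ * ‖star (W1 *ᵥ u)‖ := norm_pi_mul_le _ _
      _ = ‖u‖ * ‖W1 *ᵥ u‖ := by rw [norm_star_pi]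
      _ ≤ ‖u‖ * (mnorm W1 * ‖u‖) :=
          mul_le_mul_of_nonneg_left (norm_mulVec_le _ _) (norm_nonneg u)
      _ = mnorm W1 * (‖u‖ * ‖u‖) := by ring
    have hqd : ∀ u v : Fin n → ℂ, ‖q u - q v‖ ≤ mnorm W1 * (‖u‖ + ‖v‖) * ‖u - v‖ := by
      intro u v
      have hsplit : q u - q v = (u - v) * star (W1 *ᵥ u) + v * star (W1 *ᵥ (u - v)) := by
        rw [hq]
        funext i
        simp only [Pi.sub_apply, Pi.mul_apply, Pi.add_apply, Pi.star_apply,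
          Matrix.mulVec_sub, star_sub]
        ring
      rw [hsplit]
      calc ‖(u - v) * star (W1 *ᵥ u) + v * star (W1 *ᵥ (u - v))‖
          ≤ ‖(u - v) * star (W1 *ᵥ u)‖ + ‖v * star (W1 *ᵥ (u - v))‖ := norm_add_le _ _
      _ ≤ ‖u - v‖ * ‖star (W1 *ᵥ u)‖ + ‖v‖ * ‖star (W1 *ᵥ (u - v))‖ :=
            add_le_add (norm_pi_mul_le _ _) (norm_pi_mul_le _ _)
      _ = ‖u - v‖ * ‖W1 *ᵥ u‖ + ‖v‖ * ‖W1 *ᵥ (u - v)‖ := by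
            rw [norm_star_pi, norm_star_pi]
      _ ≤ ‖u - v‖ * (mnorm W1 * ‖u‖) + ‖v‖ * (mnorm W1 * ‖u - v‖) := by
            refine add_le_add ?_ ?_
            · exact mul_le_mul_of_nonneg_left (norm_mulVec_le _ _) (norm_nonneg _)
            · exact mul_le_mul_of_nonneg_left (norm_mulVec_le _ _) (norm_nonneg _)
      _ = mnorm W1 * (‖u‖ + ‖v‖) * ‖u - v‖ := by ring
    have hself : ∀ u : Fin n → ℂ, ‖u‖ ≤ r → ‖Φ u‖ ≤ r := by
      intro u hu
      have h2 : ‖T3 *ᵥ u‖ ≤ mnorm T3 * r :=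
        le_trans (norm_mulVec_le _ _) (mul_le_mul_of_nonneg_left hu (mnorm_nonneg T3))
      have h3 : ‖T2 *ᵥ star u‖ ≤ mnorm T2 * r := by
        refine le_trans (norm_mulVec_le _ _) ?_
        rw [norm_star_pi]
        exact mul_le_mul_of_nonneg_left hu (mnorm_nonneg T2)
      have h4 : ‖M *ᵥ q u + N *ᵥ star (q u)‖ ≤ K * r^2 := by
        refine le_trans (hMNpair (q u)) ?_
        have hstep : ‖q u‖ ≤ mnorm W1 * (r * r) := by
          refine le_trans (hqn u) ?_
          have : ‖u‖ * ‖u‖ ≤ r * r := mul_le_mul hu hu (norm_nonneg u) hr0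
          exact mul_le_mul_of_nonneg_left this (le_of_lt hKW)
        calc mnorm2 J⁻¹ * ‖q u‖ ≤ mnorm2 J⁻¹ * (mnorm W1 * (r * r)) :=
              mul_le_mul_of_nonneg_left hstep (le_of_lt hJinvPos)
        _ = K * r^2 := by rw [hK]; ring
      have e1 := norm_add_le (c0 - T3 *ᵥ u - T2 *ᵥ star u) (M *ᵥ q u + N *ᵥ star (q u))
      have e2 := norm_sub_le (c0 - T3 *ᵥ u) (T2 *ᵥ star u)
      have e3 := norm_sub_le c0 (T3 *ᵥ u)
      have hβr : mnorm T3 * r + mnorm T2 * r = β * r := by rw [hβ]; ring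
      have hΦu : ‖Φ u‖ = ‖c0 - T3 *ᵥ u - T2 *ᵥ star u + (M *ᵥ q u + N *ᵥ star (q u))‖ := by
        rw [hΦ]
      rw [hΦu]
      linarith
    have hlip : ∀ u v : Fin n → ℂ, ‖u‖ ≤ r → ‖v‖ ≤ r → ‖Φ u - Φ v‖ ≤ ‖u - v‖ := by
      intro u v hu hv
      have hdiff : Φ u - Φ v = T3 *ᵥ (v - u) + T2 *ᵥ (star v - star u)
          + (M *ᵥ (q u - q v) + N *ᵥ star (q u - q v)) := by
        rw [hΦ]
        simp only [Matrix.mulVec_sub, star_sub]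
        abel
      have h2 : ‖T3 *ᵥ (v - u)‖ ≤ mnorm T3 * ‖u - v‖ := by
        refine le_trans (norm_mulVec_le _ _) ?_
        rw [norm_sub_rev]
      have h3 : ‖T2 *ᵥ (star v - star u)‖ ≤ mnorm T2 * ‖u - v‖ := by
        have hst : star v - star u = star (v - u) := (star_sub v u).symm
        rw [hst]
        refine le_trans (norm_mulVec_le _ _) ?_
        rw [norm_star_pi, norm_sub_rev]
      have h4 : ‖M *ᵥ (q u - q v) + N *ᵥ star (q u - q v)‖ ≤ 2*K*r * ‖u - v‖ := by
        refine le_trans (hMNpair _) ?_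
        have hstep : ‖q u - q v‖ ≤ mnorm W1 * (2*r) * ‖u - v‖ := by
          refine le_trans (hqd u v) ?_
          refine mul_le_mul_of_nonneg_right ?_ (norm_nonneg _)
          refine mul_le_mul_of_nonneg_left ?_ (le_of_lt hKW)
          linarith
        calc mnorm2 J⁻¹ * ‖q u - q v‖ ≤ mnorm2 J⁻¹ * (mnorm W1 * (2*r) * ‖u - v‖) :=
              mul_le_mul_of_nonneg_left hstep (le_of_lt hJinvPos)
        _ = 2*K*r * ‖u - v‖ := by rw [hK]; ring
      have e1 := norm_add_le (T3 *ᵥ (v - u) + T2 *ᵥ (star v - star u))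
        (M *ᵥ (q u - q v) + N *ᵥ star (q u - q v))
      have e2 := norm_add_le (T3 *ᵥ (v - u)) (T2 *ᵥ (star v - star u))
      have hsum : mnorm T3 * ‖u-v‖ + mnorm T2 * ‖u-v‖ + 2*K*r*‖u-v‖ = (β + 2*K*r) * ‖u-v‖ := by
        rw [hβ]; ring
      have hfin : (β + 2*K*r) * ‖u-v‖ ≤ 1 * ‖u-v‖ :=
        mul_le_mul_of_nonneg_right hlip1 (norm_nonneg _)
      rw [hdiff]
      rw [one_mul] at hfin
      linarith
    -- continuity
    have hcontA : ∀ (A : Matrix (Fin n) (Fin n) ℂ), Continuous (fun x : Fin n → ℂ => A *ᵥ x) :=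
      fun A => LinearMap.continuous_of_finiteDimensional (Matrix.mulVecLin A)
    have hqcont : Continuous q := by
      rw [hq]
      exact continuous_id.mul (continuous_star.comp (hcontA W1))
    have hΦcont : Continuous Φ := by
      rw [hΦ]
      refine ((continuous_const.sub (hcontA T3)).sub
        ((hcontA T2).comp continuous_star)).add ?_
      exact ((hcontA M).comp hqcont).add ((hcontA N).comp (continuous_star.comp hqcont))
    obtain ⟨u, hur, hufix⟩ := exists_fixedPt_of_nonexpansive Φ hΦcont hr0 hself hlip
    -- derive the Hadamard relation from the fixed point
    refine ⟨u, ?_⟩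
    set v1 : Fin n → ℂ := mconj Z *ᵥ star Δs
      - (Matrix.diagonal (star (Z *ᵥ Δs)) *ᵥ u + (mconj Z * Matrix.diagonal (star Δs)) *ᵥ star u)
      + q u with hv1
    have hsv1 : star v1 = Z *ᵥ Δs
        - (Matrix.diagonal (Z *ᵥ Δs) *ᵥ star u + (Z * Matrix.diagonal Δs) *ᵥ u)
        + star (q u) := by
      rw [hv1, star_add, star_sub, star_add]
      have s1 : star (mconj Z *ᵥ star Δs) = Z *ᵥ Δs := by
        rw [star_mulVec', mconj_mconj, star_star]
      have s2 : star (Matrix.diagonal (star (Z *ᵥ Δs)) *ᵥ u)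
          = Matrix.diagonal (Z *ᵥ Δs) *ᵥ star u := by
        rw [star_mulVec', mconj_diagonal, star_star]
      have s3 : star ((mconj Z * Matrix.diagonal (star Δs)) *ᵥ star u)
          = (Z * Matrix.diagonal Δs) *ᵥ u := by
        rw [star_mulVec', mconj_mul, mconj_mconj, mconj_diagonal, star_star, star_star]
      rw [s1, s2, s3]
    have hT3u : T3 *ᵥ u = M *ᵥ (Matrix.diagonal (star (Z *ᵥ Δs)) *ᵥ u)
        + N *ᵥ ((Z * Matrix.diagonal Δs) *ᵥ u) := by
      rw [hT3d, Matrix.add_mulVec, Matrix.mulVec_mulVec, Matrix.mulVec_mulVec,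
        Matrix.mul_assoc]
    have hT2u : T2 *ᵥ star u = M *ᵥ ((mconj Z * Matrix.diagonal (star Δs)) *ᵥ star u)
        + N *ᵥ (Matrix.diagonal (Z *ᵥ Δs) *ᵥ star u) := by
      rw [hT2d, Matrix.add_mulVec, Matrix.mulVec_mulVec, Matrix.mulVec_mulVec,
        Matrix.mul_assoc]
    have hΦunfold : Φ u = c0 - T3 *ᵥ u - T2 *ᵥ star u + (M *ᵥ q u + N *ᵥ star (q u)) := rfl
    have hΦv1 : Φ u = M *ᵥ v1 + N *ᵥ star v1 := by
      rw [hΦunfold, hsv1, hv1]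
      rw [Matrix.mulVec_add, Matrix.mulVec_sub, Matrix.mulVec_add,
        Matrix.mulVec_add, Matrix.mulVec_sub, Matrix.mulVec_add]
      rw [hc0, hT3u, hT2u]
      abel
    have hufix2 : u = M *ᵥ v1 + N *ᵥ star v1 := by
      rw [← hΦv1]
      exact hufix.symm
    have hstarfix : star u = mconj N *ᵥ v1 + mconj M *ᵥ star v1 := by
      have h0 := congrArg star hufix2
      rw [star_add, star_mulVec', star_mulVec', star_star] at h0
      rw [h0]
      abel
    set vv : (Fin n ⊕ Fin n) → ℂ := Sum.elim v1 (star v1) with hvv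
    set uu : (Fin n ⊕ Fin n) → ℂ := Sum.elim u (star u) with huu
    have hJinv_vv : J⁻¹ *ᵥ vv = uu := by
      rw [hMN, hvv, huu, Matrix.fromBlocks_mulVec]
      have hl : (Sum.elim v1 (star v1)) ∘ Sum.inl = v1 := rfl
      have hr' : (Sum.elim v1 (star v1)) ∘ Sum.inr = star v1 := rfl
      rw [hl, hr']
      funext p
      cases p with
      | inl i => exact congrFun hufix2.symm i
      | inr i => exact congrFun hstarfix.symm i
    have hJvv : J *ᵥ uu = vv := by
      calc J *ᵥ uu = J *ᵥ (J⁻¹ *ᵥ vv) := by rw [hJinv_vv]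
      _ = (J * J⁻¹) *ᵥ vv := Matrix.mulVec_mulVec _ _ _
      _ = vv := by rw [Matrix.mul_nonsing_inv J hJdet, Matrix.one_mulVec]
    have hbot : (Z * Matrix.diagonal ss) *ᵥ u + star u = star v1 := by
      rw [hJ, huu, Matrix.fromBlocks_mulVec] at hJvv
      have hl : (Sum.elim u (star u)) ∘ Sum.inl = u := rfl
      have hr' : (Sum.elim u (star u)) ∘ Sum.inr = star u := rfl
      rw [hl, hr'] at hJvv
      funext i
      have h2 := congrFun hJvv (Sum.inr i)
      simp only [Sum.elim_inr, hvv, Matrix.one_mulVec] at h2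
      exact h2
    -- componentwise conclusion
    have hsum2 : (Z * Matrix.diagonal ss) *ᵥ u + (Z * Matrix.diagonal Δs) *ᵥ u = W1 *ᵥ u := by
      rw [← Matrix.add_mulVec]
      congr 1
      rw [hW1, ← Matrix.mul_add]
      congr 1
      have hdd : Matrix.diagonal ss + Matrix.diagonal Δs = Matrix.diagonal s := by
        rw [hΔs]
        funext i j
        by_cases h : i = j <;> simp [Matrix.diagonal_apply, h]
      rw [hdd]
    have hw : Z *ᵥ (Δs - s * u) = (Z *ᵥ Δs) - W1 *ᵥ u := by
      rw [Matrix.mulVec_sub]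
      congr 1
      rw [hW1, ← Matrix.mulVec_mulVec, diagonal_mulVec']
    rw [hw]
    funext i
    have hb := congrFun hbot i
    have hv := congrFun hsv1 i
    have hqi : star (q u i) = star (u i) * (W1 *ᵥ u) i := by
      have hq0 : q u i = u i * star ((W1 *ᵥ u) i) := rfl
      rw [hq0, star_mul', star_star]
    have hsum_i := congrFun hsum2 i
    rw [hv] at hb
    simp only [Pi.add_apply, Pi.sub_apply, Pi.mul_apply, Pi.one_apply,
      diagonal_mulVec', Pi.star_apply] at hb hsum_i ⊢
    rw [hqi] at hb
    linear_combination hb - hsum_i
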